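/- arXiv:1208.5441 — 4 statements merged into one kernel-verified Lean document; each statement's English description precedes it below -/
import Mathlib

section
/- If five mutually tangent spheres in R^3 have curvatures κ1,...,κ5 (with a sphere internally tangent to the others given negative curvature), then 3(κ1²+κ2²+κ3²+κ4²+κ5²) = (κ1+κ2+κ3+κ4+κ5)². -/
open Matrix

/-- Lorentz-type lift of the spheres to rows of a 5×5 matrix. -/
noncomputable def soddyM (c : Fin 5 → EuclideanSpace ℝ (Fin 3)) (κ : Fin 5 → ℝ) :
    Matrix (Fin 5) (Fin 5) ℝ := fun i =>
  ![κ i * c i 0, κ i * c i 1, κ i * c i 2, κ i,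
    κ i * ((c i 0)^2 + (c i 1)^2 + (c i 2)^2 - ((κ i)⁻¹)^2)]

/-- The matrix of the inversive bilinear form. -/
noncomputable def soddyQ : Matrix (Fin 5) (Fin 5) ℝ :=
  !![1,0,0,0,0; 0,1,0,0,0; 0,0,1,0,0; 0,0,0,0,-(1/2); 0,0,0,-(1/2),0]

/-- The Gram matrix `2·I - J`. -/
noncomputable def soddyG : Matrix (Fin 5) (Fin 5) ℝ := fun i j => if i = j then 1 else -1

/-- The inverse of the Gram matrix. -/
noncomputable def soddyH : Matrix (Fin 5) (Fin 5) ℝ := fun i j => if i = j then 1/3 else -(1/6)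

lemma soddyGH : soddyG * soddyH = 1 := by
  ext i j
  fin_cases i <;> fin_cases j <;>
    simp [Matrix.mul_apply, Fin.sum_univ_five, soddyG, soddyH, Matrix.one_apply] <;> norm_num

lemma soddy_key (c : Fin 5 → EuclideanSpace ℝ (Fin 3)) (κ : Fin 5 → ℝ)
    (hκ : ∀ i, κ i ≠ 0)
    (hd : ∀ i j, i ≠ j →
      (c i 0 - c j 0)^2 + (c i 1 - c j 1)^2 + (c i 2 - c j 2)^2 = (1/κ i + 1/κ j)^2) :
    soddyM c κ * soddyQ * (soddyM c κ)ᵀ = soddyG := by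
  ext i j
  rw [Matrix.mul_apply]
  by_cases h : i = j
  · subst h
    simp [Matrix.mul_apply, Fin.sum_univ_five, soddyM, soddyQ, soddyG, Matrix.transpose_apply]
    linear_combination mul_inv_cancel₀ (pow_ne_zero 2 (hκ i))
  · have hd' := hd i j h
    simp [Matrix.mul_apply, Fin.sum_univ_five, soddyM, soddyQ, soddyG, Matrix.transpose_apply, h]
    linear_combination (-(κ i * κ j)/2) * hd' - (κ j * (κ j)⁻¹) * mul_inv_cancel₀ (hκ i) -
      mul_inv_cancel₀ (hκ j)

/-- Soddy's sphere theorem: five mutually tangent spheres in ℝ³ (with signed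
curvatures, a bounding sphere internally tangent to the others having negative
curvature, so that tangency reads `dist = |1/κᵢ + 1/κⱼ|`) satisfy
`3 Σ κᵢ² = (Σ κᵢ)²`. -/
theorem soddy_sphere_theorem
    (c : Fin 5 → EuclideanSpace ℝ (Fin 3)) (κ : Fin 5 → ℝ)
    (hκ : ∀ i, κ i ≠ 0)
    (hcenters : ∀ i j, i ≠ j → c i ≠ c j)
    (htangent : ∀ i j, i ≠ j → dist (c i) (c j) ^ 2 = (1 / κ i + 1 / κ j) ^ 2) :
    3 * (∑ i, κ i ^ 2) = (∑ i, κ i) ^ 2 := by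
  have hd : ∀ i j, i ≠ j →
      (c i 0 - c j 0)^2 + (c i 1 - c j 1)^2 + (c i 2 - c j 2)^2 = (1/κ i + 1/κ j)^2 := by
    intro i j hij
    have h := htangent i j hij
    rw [EuclideanSpace.dist_eq, Real.sq_sqrt (by positivity)] at h
    simpa [Fin.sum_univ_three, Real.dist_eq, sq_abs] using h
  have key := soddy_key c κ hκ hd
  set e : Fin 5 → ℝ := ![0,0,0,0,-2] with hedef
  set x : Fin 5 → ℝ := soddyH *ᵥ κ with hxdef
  set M := soddyM c κ with hMdef
  -- the lift of the point at infinity pairs with each sphere to give its curvature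
  have hMQe : (M * soddyQ) *ᵥ e = κ := by
    ext j
    simp [Matrix.mulVec, Matrix.mul_apply, dotProduct, Fin.sum_univ_five, hMdef, soddyM,
      soddyQ, hedef]
  -- Gram matrix times x gives the curvatures
  have hGx : soddyG *ᵥ x = κ := by
    rw [hxdef, Matrix.mulVec_mulVec, soddyGH, Matrix.one_mulVec]
  have hA : (M * soddyQ) *ᵥ (Mᵀ *ᵥ x) = κ := by
    rw [Matrix.mulVec_mulVec, Matrix.mul_assoc, ← Matrix.mul_assoc, hMdef, key]
    exact hGx
  have hinv : (Mᵀ * soddyH) * (M * soddyQ) = 1 := by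
    rw [mul_eq_one_comm]
    calc M * soddyQ * (Mᵀ * soddyH) = (M * soddyQ * Mᵀ) * soddyH := by
            rw [Matrix.mul_assoc (M * soddyQ)]
      _ = soddyG * soddyH := by rw [hMdef, key]
      _ = 1 := soddyGH
  -- hence the lift of infinity is the x-combination of the sphere lifts
  have hMe : Mᵀ *ᵥ x = e := by
    have h1 : (Mᵀ * soddyH) *ᵥ ((M * soddyQ) *ᵥ (Mᵀ *ᵥ x))
        = (Mᵀ * soddyH) *ᵥ ((M * soddyQ) *ᵥ e) := by rw [hA, hMQe]
    simp only [Matrix.mulVec_mulVec] at h1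
    rw [← Matrix.mul_assoc, hinv] at h1
    simpa [Matrix.one_mulVec, hinv] using h1
  -- the lift of infinity is isotropic
  have hze : e ⬝ᵥ (soddyQ *ᵥ e) = 0 := by
    simp [dotProduct, Matrix.mulVec, Fin.sum_univ_five, soddyQ, hedef]
  have hxκ : x ⬝ᵥ κ = 0 := by
    calc x ⬝ᵥ κ = x ⬝ᵥ ((M * soddyQ) *ᵥ e) := by rw [hMQe]
      _ = x ⬝ᵥ (M *ᵥ (soddyQ *ᵥ e)) := by rw [Matrix.mulVec_mulVec]
      _ = (x ᵥ* M) ⬝ᵥ (soddyQ *ᵥ e) := by rw [Matrix.dotProduct_mulVec]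
      _ = (Mᵀ *ᵥ x) ⬝ᵥ (soddyQ *ᵥ e) := by rw [Matrix.mulVec_transpose]
      _ = e ⬝ᵥ (soddyQ *ᵥ e) := by rw [hMe]
      _ = 0 := hze
  have hexp : x ⬝ᵥ κ = (∑ i, κ i ^ 2) / 2 - (∑ i, κ i) ^ 2 / 6 := by
    simp [hxdef, dotProduct, Matrix.mulVec, Fin.sum_univ_five, soddyH]
    ring
  rw [hexp] at hxκ
  linarith
end

section
/- For any distinct j,k ∈ {1,...,5}, the generators of the Soddy group satisfy (Mj·Mk)³ = I. -/
/-- The generator `Mⱼ` of the Soddy group: the identity matrix with the `j`-th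
row replaced by the row with `-1` in position `j` and `1` elsewhere. -/
def soddyGen (j : Fin 5) : Matrix (Fin 5) (Fin 5) ℤ :=
  fun a b => if a = j then (if b = j then -1 else 1) else (if a = b then 1 else 0)

theorem soddyGen_mul_cube (j k : Fin 5) (hjk : j ≠ k) :
    (soddyGen j * soddyGen k) ^ 3 = 1 := by
  fin_cases j <;> fin_cases k <;> first
    | exact absurd rfl hjk
    | decide
end

section
/- For g = [[α,β],[γ,δ]] ∈ SL2(C) and a Hermitian matrix X = [[3A, C+i√3 B],[C−i√3 B, D]] with A,B,C,D real, the matrix X' = g·X·ḡᵗ is again Hermitian of the form [[3A', C'+i√3 B'],[C'−i√3 B', D']] with real A',B',C',D', and F(A',B',C',D') = F(A,B,C,D), where F(A,B,C,D) = 3B² + C² − 3AD. -/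
open Complex Matrix in
/-- The spin action of `SL₂(ℂ)` on Hermitian matrices
`X = [[3A, C+i√3B],[C−i√3B, D]]` preserves the shape of `X` and the form
`F(A,B,C,D) = 3B² + C² − 3AD`. -/
theorem spin_action_preserves_F (α β γ δ : ℂ) (hdet : α * δ - β * γ = 1)
    (A B C D : ℝ) :
    ∃ A' B' C' D' : ℝ,
      (!![α, β; γ, δ] * !![(3 * A : ℂ), C + I * Real.sqrt 3 * B;
          C - I * Real.sqrt 3 * B, D] * (!![α, β; γ, δ])ᴴ)
        = !![(3 * A' : ℂ), C' + I * Real.sqrt 3 * B';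
             C' - I * Real.sqrt 3 * B', D'] ∧
      3 * B'^2 + C'^2 - 3 * A' * D' = 3 * B^2 + C^2 - 3 * A * D := by
  set s : ℝ := Real.sqrt 3 with hs
  have hs2 : (s : ℂ) * s = 3 := by
    rw [← Complex.ofReal_mul, Real.mul_self_sqrt (by norm_num)]
    norm_num
  have hs0 : s ≠ 0 := by
    rw [hs]; positivity
  have hIs : (I * (s : ℂ)) ^ 2 = -3 := by
    rw [mul_pow, Complex.I_sq, sq, hs2]; ring
  set e00 : ℂ := (α * (3*A) + β * (C - I*s*B)) * (starRingEnd ℂ) α + (α * (C + I*s*B) + β * D) * (starRingEnd ℂ) β with he00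
  set e01 : ℂ := (α * (3*A) + β * (C - I*s*B)) * (starRingEnd ℂ) γ + (α * (C + I*s*B) + β * D) * (starRingEnd ℂ) δ with he01
  set e10 : ℂ := (γ * (3*A) + δ * (C - I*s*B)) * (starRingEnd ℂ) α + (γ * (C + I*s*B) + δ * D) * (starRingEnd ℂ) β with he10
  set e11 : ℂ := (γ * (3*A) + δ * (C - I*s*B)) * (starRingEnd ℂ) γ + (γ * (C + I*s*B) + δ * D) * (starRingEnd ℂ) δ with he11
  have hM : (!![α, β; γ, δ] * !![(3 * A : ℂ), C + I * s * B;
          C - I * s * B, D] * (!![α, β; γ, δ])ᴴ) = !![e00, e01; e10, e11] := by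
    rw [show (!![α, β; γ, δ])ᴴ = !![(starRingEnd ℂ) α, (starRingEnd ℂ) γ; (starRingEnd ℂ) β, (starRingEnd ℂ) δ] from by
      ext i j; fin_cases i <;> fin_cases j <;> simp [Matrix.conjTranspose_apply]]
    rw [Matrix.mul_fin_two, Matrix.mul_fin_two]
  have conj00 : (starRingEnd ℂ) e00 = e00 := by
    simp only [he00, map_add, _root_.map_mul, map_sub, Complex.conj_ofReal, Complex.conj_conj,
      Complex.conj_I, map_ofNat]
    ring
  have conj11 : (starRingEnd ℂ) e11 = e11 := by
    simp only [he11, map_add, _root_.map_mul, map_sub, Complex.conj_ofReal, Complex.conj_conj,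
      Complex.conj_I, map_ofNat]
    ring
  have conj01 : (starRingEnd ℂ) e01 = e10 := by
    simp only [he01, he10, map_add, _root_.map_mul, map_sub, Complex.conj_ofReal, Complex.conj_conj,
      Complex.conj_I, map_ofNat]
    ring
  set A' : ℝ := e00.re / 3 with hA'
  set B' : ℝ := e01.im / s with hB'
  set C' : ℝ := e01.re with hC'
  set D' : ℝ := e11.re with hD'
  have h00 : e00 = (3 * (A' : ℝ) : ℂ) := by
    rw [← Complex.conj_eq_iff_re.mp conj00, hA']; push_cast; ring
  have h11 : e11 = ((D' : ℝ) : ℂ) := by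
    rw [← Complex.conj_eq_iff_re.mp conj11]
  have hsC : (s : ℂ) ≠ 0 := by exact_mod_cast hs0
  have h01 : e01 = (C' : ℂ) + I * s * (B' : ℝ) := by
    rw [hC', hB']
    push_cast
    rw [show I * (s:ℂ) * ((e01.im:ℂ) / s) = (e01.im:ℂ) * I * ((s:ℂ)/s) from by ring,
      div_self hsC, mul_one]
    exact (Complex.re_add_im e01).symm
  have h10 : e10 = (C' : ℂ) - I * s * (B' : ℝ) := by
    rw [← conj01, h01]
    simp only [map_add, _root_.map_mul, Complex.conj_ofReal, Complex.conj_I]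
    ring
  have hfinal : (!![α, β; γ, δ] * !![(3 * A : ℂ), C + I * s * B;
          C - I * s * B, D] * (!![α, β; γ, δ])ᴴ)
        = !![(3 * A' : ℂ), C' + I * s * B'; C' - I * s * B', D'] := by
    rw [hM, h00, h01, h10, h11]
  refine ⟨A', B', C', D', hfinal, ?_⟩
  have hdetEq := congrArg Matrix.det hfinal
  rw [Matrix.det_mul, Matrix.det_mul, Matrix.det_conjTranspose] at hdetEq
  rw [Matrix.det_fin_two_of, Matrix.det_fin_two_of, Matrix.det_fin_two_of, hdet] at hdetEq
  simp only [one_mul, star_one, mul_one] at hdetEq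
  have expand : ∀ a b c d : ℝ, (3 * a : ℂ) * d - ((c : ℂ) + I * s * b) * ((c : ℂ) - I * s * b)
      = ((3 * a * d - c ^ 2 - 3 * b ^ 2 : ℝ) : ℂ) := by
    intro a b c d
    push_cast
    linear_combination (b : ℂ) ^ 2 * hIs
  rw [expand, expand] at hdetEq
  have := Complex.ofReal_inj.mp hdetEq
  linarith
end

section
/- Let (κ1,...,κ5) ∈ Z^5 lie on the Soddy cone 3Σκj² = (Σκj)² with negative first entry κ1 < 0 and κ2+κ1, κ3+κ1, κ4+κ1, κ5+κ1 not all zero. Then the quaternary form f of the previous statement (with coefficients in terms of κj) satisfies f(γ1,γ2,δ1,δ2) ≡ (κ1+κ5)(δ1²+δ1δ2+δ2²) (mod 3) for all integers γ1,γ2,δ1,δ2. -/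
/-- Modulo 3, the quaternary form `f_v` attached to a quintuple on the Soddy
cone reduces to `(κ₁ + κ₅)(δ₁² + δ₁δ₂ + δ₂²)`. -/
theorem soddy_quaternary_mod_three (κ₁ κ₂ κ₃ κ₄ κ₅ : ℤ)
    (hcone : 3 * (κ₁^2 + κ₂^2 + κ₃^2 + κ₄^2 + κ₅^2)
      = (κ₁ + κ₂ + κ₃ + κ₄ + κ₅)^2)
    (hneg : κ₁ < 0)
    (hnz : ¬(κ₂ + κ₁ = 0 ∧ κ₃ + κ₁ = 0 ∧ κ₄ + κ₁ = 0 ∧ κ₅ + κ₁ = 0)) :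
    ∀ γ₁ γ₂ δ₁ δ₂ : ℤ,
      3 * (κ₁ + κ₄) * (γ₁^2 + γ₁*γ₂ + γ₂^2)
        + (κ₁ + κ₅) * (δ₁^2 + δ₁*δ₂ + δ₂^2)
        + (κ₁ - 2*κ₂ + κ₃ + κ₄ + κ₅) * (γ₁*δ₂)
        + (κ₁ + κ₂ - 2*κ₃ + κ₄ + κ₅) * (γ₂*δ₁)
        + (2*κ₁ - κ₂ - κ₃ + 2*κ₄ + 2*κ₅) * (γ₁*δ₁ + γ₂*δ₂)
      ≡ (κ₁ + κ₅) * (δ₁^2 + δ₁*δ₂ + δ₂^2) [ZMOD 3] := by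
  intro γ₁ γ₂ δ₁ δ₂
  have hsum : (3 : ℤ) ∣ (κ₁ + κ₂ + κ₃ + κ₄ + κ₅) := by
    have h3 : (3 : ℤ) ∣ (κ₁ + κ₂ + κ₃ + κ₄ + κ₅)^2 := ⟨_, hcone.symm⟩
    exact Int.prime_three.dvd_of_dvd_pow h3
  obtain ⟨m, hm⟩ := hsum
  have hκ₅ : κ₅ = 3*m - κ₁ - κ₂ - κ₃ - κ₄ := by linarith
  subst hκ₅
  refine Int.ModEq.symm (Int.modEq_iff_dvd.mpr ?_)
  exact ⟨(κ₁+κ₄)*(γ₁^2 + γ₁*γ₂ + γ₂^2) + (m-κ₂)*(γ₁*δ₂) + (m-κ₃)*(γ₂*δ₁)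
    + (2*m-κ₂-κ₃)*(γ₁*δ₁+γ₂*δ₂), by ring⟩
end
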